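/- arXiv:2108.06756 — 10 statements merged into one kernel-verified Lean document; each statement's English description precedes it below -/
import Mathlib

section
/- Let p k : ℕ with k + 2 ≤ p. For every real number x, rounding the round-to-odd result of x at precision p back to precision k with round-to-nearest-ties-to-even gives the same value as rounding x directly: RN k (roundOdd p x) = RN k x. (Double rounding through the round-to-odd mode with at least two extra bits of precision is innocuous for the round-to-nearest-ties-to-even mode.) -/
open Classical in
/-- Round-to-odd at precision `p`: if `x` is an integer multiple of `2^(-p)` it is
unchanged; otherwise it rounds to the unique multiple of `2^(-p)` with odd numerator
strictly between the two consecutive multiples of `2^(-p)` enclosing `x`. -/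
noncomputable def roundOdd (p : ℕ) (x : ℝ) : ℝ :=
  if ∃ m : ℤ, (2 : ℝ) ^ p * x = (m : ℝ) then x
  else ((2 * ⌊(2 : ℝ) ^ (p - 1) * x⌋ + 1 : ℤ) : ℝ) / 2 ^ p

open Classical in
/-- Round-to-nearest-ties-to-even at precision `k`. -/
noncomputable def RN (k : ℕ) (x : ℝ) : ℝ :=
  ((if Int.fract ((2 : ℝ) ^ k * x) = 1 / 2 then ⌊(2 : ℝ) ^ k * x⌋ + ⌊(2 : ℝ) ^ k * x⌋ % 2
    else round ((2 : ℝ) ^ k * x) : ℤ) : ℝ) / 2 ^ k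

/-- Round-to-nearest-ties-to-away at precision `k`. -/
noncomputable def RA (k : ℕ) (x : ℝ) : ℝ :=
  if 0 ≤ x then ((⌊(2 : ℝ) ^ k * x + 1 / 2⌋ : ℤ) : ℝ) / 2 ^ k
  else ((⌈(2 : ℝ) ^ k * x - 1 / 2⌉ : ℤ) : ℝ) / 2 ^ k

/-- Round-towards-zero at precision `k`. -/
noncomputable def RZ (k : ℕ) (x : ℝ) : ℝ :=
  if 0 ≤ x then ((⌊(2 : ℝ) ^ k * x⌋ : ℤ) : ℝ) / 2 ^ k
  else ((⌈(2 : ℝ) ^ k * x⌉ : ℤ) : ℝ) / 2 ^ k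

/-- Round-towards-positive-infinity at precision `k`. -/
noncomputable def RU (k : ℕ) (x : ℝ) : ℝ := ((⌈(2 : ℝ) ^ k * x⌉ : ℤ) : ℝ) / 2 ^ k

/-- Round-towards-negative-infinity at precision `k`. -/
noncomputable def RD (k : ℕ) (x : ℝ) : ℝ := ((⌊(2 : ℝ) ^ k * x⌋ : ℤ) : ℝ) / 2 ^ k


lemma no_half (d : ℕ) (hd : 2 ≤ d) (m n : ℤ) (s : ℝ)
    (h1 : ((2*m : ℤ) : ℝ) < 2^d * s) (h2 : 2^d * s < ((2*m+2 : ℤ) : ℝ)) :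
    (2:ℝ) * s ≠ (n : ℝ) := by
  intro h
  have hsplit : (2:ℝ)^d = 2^(d-1) * 2 := by
    rw [← pow_succ]; congr 1; omega
  have he : (2:ℝ)^d * s = ((2^(d-1) * n : ℤ) : ℝ) := by
    rw [hsplit]; push_cast; rw [mul_assoc, h]
  rw [he] at h1 h2
  have h1' : 2*m < 2^(d-1) * n := by exact_mod_cast h1
  have h2' : 2^(d-1) * n < 2*m + 2 := by exact_mod_cast h2
  have hdvd : (2:ℤ) ∣ 2^(d-1) := dvd_pow_self 2 (by omega)
  obtain ⟨c, hc⟩ := hdvd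
  rw [hc, mul_assoc] at h1' h2'
  generalize c * n = e at h1' h2'
  omega

lemma floor_half_lt (d : ℕ) (hd : 2 ≤ d) (m : ℤ) (s s' : ℝ)
    (hs1 : ((2*m : ℤ) : ℝ) < 2^d * s) (hs2 : 2^d * s < ((2*m+2 : ℤ) : ℝ))
    (hs1' : ((2*m : ℤ) : ℝ) < 2^d * s') (hs2' : 2^d * s' < ((2*m+2 : ℤ) : ℝ))
    (hlt : ⌊s + 1/2⌋ < ⌊s' + 1/2⌋) : False := by
  set n := ⌊s' + 1/2⌋ with hn
  have ha : s + 1/2 < (n : ℝ) := by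
    have h1 := Int.lt_floor_add_one (s + 1/2)
    have h2 : (⌊s + 1/2⌋ : ℝ) + 1 ≤ (n : ℝ) := by exact_mod_cast hlt
    linarith
  have hb : (n : ℝ) ≤ s' + 1/2 := Int.floor_le _
  have hpow : (0:ℝ) < 2^d := by positivity
  have hP1 : ((2*m : ℤ) : ℝ) < 2^d * ((n:ℝ) - 1/2) := by
    have : 2^d * s < 2^d * ((n:ℝ) - 1/2) := by
      apply mul_lt_mul_of_pos_left (by linarith) hpow
    linarith
  have hP2 : 2^d * ((n:ℝ) - 1/2) < ((2*m+2 : ℤ) : ℝ) := by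
    have : 2^d * ((n:ℝ) - 1/2) ≤ 2^d * s' := by
      apply mul_le_mul_of_nonneg_left (by linarith) (le_of_lt hpow)
    linarith
  exact no_half d hd m (2*n-1) ((n:ℝ) - 1/2) hP1 hP2 (by push_cast; ring)

lemma round_eq_aux (d : ℕ) (hd : 2 ≤ d) (m : ℤ) (s s' : ℝ)
    (hs1 : ((2*m : ℤ) : ℝ) < 2^d * s) (hs2 : 2^d * s < ((2*m+2 : ℤ) : ℝ))
    (hs1' : ((2*m : ℤ) : ℝ) < 2^d * s') (hs2' : 2^d * s' < ((2*m+2 : ℤ) : ℝ)) :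
    round s = round s' := by
  rw [round_eq, round_eq]
  by_contra hne
  rcases lt_or_gt_of_ne hne with h | h
  · exact floor_half_lt d hd m s s' hs1 hs2 hs1' hs2' h
  · exact floor_half_lt d hd m s' s hs1' hs2' hs1 hs2 h

lemma fract_ne_half (d : ℕ) (hd : 2 ≤ d) (m : ℤ) (s : ℝ)
    (hs1 : ((2*m : ℤ) : ℝ) < 2^d * s) (hs2 : 2^d * s < ((2*m+2 : ℤ) : ℝ)) :
    Int.fract s ≠ 1/2 := by
  intro hf
  apply no_half d hd m (2*⌊s⌋+1) s hs1 hs2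
  have h := Int.floor_add_fract s
  rw [hf] at h
  push_cast
  linarith

theorem roundOdd_RN_double_rounding (p k : ℕ) (hkp : k + 2 ≤ p) (x : ℝ) :
    RN k (roundOdd p x) = RN k x := by
  rw [roundOdd]
  split
  · rfl
  next h =>
    set m := ⌊(2:ℝ)^(p-1) * x⌋ with hm
    have hd : 2 ≤ p - k := by omega
    have hp1 : (2:ℝ)^p = 2^(p-1) * 2 := by
      rw [← pow_succ]; congr 1; omega
    have h2p : (2:ℝ)^p = 2^k * 2^(p-k) := by
      rw [← pow_add]; congr 1; omega
    have hfl : (m:ℝ) ≤ 2^(p-1) * x := Int.floor_le _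
    have hlt : 2^(p-1) * x < (m:ℝ) + 1 := Int.lt_floor_add_one _
    have hne : (m:ℝ) ≠ 2^(p-1) * x := by
      intro he
      exact h ⟨2*m, by rw [hp1]; push_cast; linarith⟩
    have h1 : ((2*m : ℤ):ℝ) < 2^p * x := by
      have := lt_of_le_of_ne hfl hne
      rw [hp1]; push_cast; linarith
    have h2 : 2^p * x < ((2*m+2 : ℤ):ℝ) := by
      rw [hp1]; push_cast; linarith
    set y : ℝ := ((2 * m + 1 : ℤ) : ℝ) / 2 ^ p with hy
    have hxs : (2:ℝ)^(p-k) * ((2:ℝ)^k * x) = 2^p * x := by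
      rw [h2p]; ring
    have hys : (2:ℝ)^(p-k) * ((2:ℝ)^k * y) = ((2*m+1 : ℤ):ℝ) := by
      have hp0 : (2:ℝ)^p ≠ 0 := by positivity
      rw [hy]
      field_simp
      rw [h2p]; ring
    have hs1 : ((2*m:ℤ):ℝ) < 2^(p-k) * ((2:ℝ)^k * x) := by rw [hxs]; exact h1
    have hs2 : 2^(p-k) * ((2:ℝ)^k * x) < ((2*m+2:ℤ):ℝ) := by rw [hxs]; exact h2
    have hs1' : ((2*m:ℤ):ℝ) < 2^(p-k) * ((2:ℝ)^k * y) := by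
      rw [hys]; push_cast; linarith
    have hs2' : 2^(p-k) * ((2:ℝ)^k * y) < ((2*m+2:ℤ):ℝ) := by
      rw [hys]; push_cast; linarith
    have hf : Int.fract ((2:ℝ)^k * x) ≠ 1/2 := fract_ne_half _ hd m _ hs1 hs2
    have hf' : Int.fract ((2:ℝ)^k * y) ≠ 1/2 := fract_ne_half _ hd m _ hs1' hs2'
    have hr : round ((2:ℝ)^k * y) = round ((2:ℝ)^k * x) :=
      round_eq_aux _ hd m _ _ hs1' hs2' hs1 hs2
    simp only [RN, if_neg hf, if_neg hf', hr]
end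

section
/- Let p k : ℕ with k + 2 ≤ p. For every real number x, rounding the round-to-odd result of x at precision p back to precision k with round-to-nearest-ties-to-away gives the same value as rounding x directly: RA k (roundOdd p x) = RA k x. -/
private lemma no_half_s1 (q : ℕ) (hq : 2 ≤ q) (m n : ℤ)
    (h1 : (2 * (m:ℝ)) / 2 ^ q < (n:ℝ) - 1/2)
    (h2 : (n:ℝ) - 1/2 < (2 * (m:ℝ) + 2) / 2 ^ q) : False := by
  obtain ⟨r, rfl⟩ : ∃ r, q = r + 2 := ⟨q - 2, by omega⟩
  have hpow : (0:ℝ) < (2:ℝ) ^ (r + 2) := by positivity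
  rw [div_lt_iff₀ hpow] at h1
  rw [lt_div_iff₀ hpow] at h2
  have e : ((n:ℝ) - 1/2) * 2 ^ (r + 2) = ((2 * ((2*n-1) * 2^r) : ℤ) : ℝ) := by
    push_cast; ring
  rw [e] at h1 h2
  have h1' : 2 * m < 2 * ((2*n-1) * 2^r) := by exact_mod_cast h1
  have h2' : 2 * ((2*n-1) * 2^r) < 2 * m + 2 := by exact_mod_cast h2
  omega

private lemma floor_half_le (q : ℕ) (hq : 2 ≤ q) (m : ℤ) (s t : ℝ)
    (hs1 : (2 * (m:ℝ)) / 2 ^ q < s)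
    (ht1 : (2 * (m:ℝ)) / 2 ^ q < t) (ht2 : t < (2 * (m:ℝ) + 2) / 2 ^ q) :
    ⌊t + 1/2⌋ ≤ ⌊s + 1/2⌋ := by
  by_contra h
  push_neg at h
  set n := ⌊t + 1/2⌋ with hn
  have hns : s < (n:ℝ) - 1/2 := by
    have h1 : ⌊s + 1/2⌋ + 1 ≤ n := h
    have h2 := Int.lt_floor_add_one (s + 1/2)
    have h3 : ((⌊s + 1/2⌋ : ℝ) + 1) ≤ (n:ℝ) := by exact_mod_cast h1
    linarith
  have hnt : (n:ℝ) - 1/2 ≤ t := by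
    have := Int.floor_le (t + 1/2); linarith
  exact no_half_s1 q hq m n (lt_trans hs1 hns) (lt_of_le_of_lt hnt ht2)

private lemma floor_half_eq (q : ℕ) (hq : 2 ≤ q) (m : ℤ) (s t : ℝ)
    (hs1 : (2 * (m:ℝ)) / 2 ^ q < s) (hs2 : s < (2 * (m:ℝ) + 2) / 2 ^ q)
    (ht1 : (2 * (m:ℝ)) / 2 ^ q < t) (ht2 : t < (2 * (m:ℝ) + 2) / 2 ^ q) :
    ⌊s + 1/2⌋ = ⌊t + 1/2⌋ :=
  le_antisymm (floor_half_le q hq m t s ht1 hs1 hs2) (floor_half_le q hq m s t hs1 ht1 ht2)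

private lemma ceil_half_le (q : ℕ) (hq : 2 ≤ q) (m : ℤ) (s t : ℝ)
    (hs2 : s < (2 * (m:ℝ) + 2) / 2 ^ q)
    (ht1 : (2 * (m:ℝ)) / 2 ^ q < t) (ht2 : t < (2 * (m:ℝ) + 2) / 2 ^ q) :
    ⌈s - 1/2⌉ ≤ ⌈t - 1/2⌉ := by
  by_contra h
  push_neg at h
  set n := ⌈s - 1/2⌉ with hn
  have hns : (n:ℝ) - 1/2 < s := by
    have := Int.ceil_lt_add_one (s - 1/2); linarith
  have hnt : t ≤ (n:ℝ) - 1/2 := by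
    have h1 : ⌈t - 1/2⌉ ≤ n - 1 := by omega
    have h2 := Int.le_ceil (t - 1/2)
    have h3 : ((⌈t - 1/2⌉ : ℝ)) ≤ (n:ℝ) - 1 := by exact_mod_cast h1
    linarith
  exact no_half_s1 q hq m n (lt_of_lt_of_le ht1 hnt) (lt_trans hns hs2)

private lemma ceil_half_eq (q : ℕ) (hq : 2 ≤ q) (m : ℤ) (s t : ℝ)
    (hs1 : (2 * (m:ℝ)) / 2 ^ q < s) (hs2 : s < (2 * (m:ℝ) + 2) / 2 ^ q)
    (ht1 : (2 * (m:ℝ)) / 2 ^ q < t) (ht2 : t < (2 * (m:ℝ) + 2) / 2 ^ q) :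
    ⌈s - 1/2⌉ = ⌈t - 1/2⌉ :=
  le_antisymm (ceil_half_le q hq m s t hs2 ht1 ht2) (ceil_half_le q hq m t s ht2 hs1 hs2)

theorem roundOdd_RA_double_rounding (p k : ℕ) (hkp : k + 2 ≤ p) (x : ℝ) :
    RA k (roundOdd p x) = RA k x := by
  unfold roundOdd
  split_ifs with h
  · rfl
  · push_neg at h
    set m := ⌊(2:ℝ) ^ (p - 1) * x⌋ with hm
    obtain ⟨q, hq⟩ : ∃ q, p = k + q := ⟨p - k, by omega⟩
    have hq2 : 2 ≤ q := by omega
    have hpowp : (0:ℝ) < (2:ℝ) ^ p := by positivity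
    have hpowq : (0:ℝ) < (2:ℝ) ^ q := by positivity
    have hsplit : (2:ℝ) ^ p = 2 ^ k * 2 ^ q := by rw [hq, pow_add]
    have hp1 : (2:ℝ) ^ p = 2 * 2 ^ (p - 1) := by
      rw [← pow_succ']
      congr 1; omega
    -- bounds on 2^p * x
    have hfl : ((m:ℝ)) ≤ (2:ℝ) ^ (p - 1) * x := by
      rw [hm]; exact Int.floor_le _
    have hfu : (2:ℝ) ^ (p - 1) * x < (m:ℝ) + 1 := by
      rw [hm]; exact Int.lt_floor_add_one _
    have hx1 : (2 * (m:ℝ)) < 2 ^ p * x := by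
      rcases lt_or_eq_of_le hfl with h' | h'
      · rw [hp1]; nlinarith
      · exact absurd (by rw [hp1, mul_assoc, ← h']; push_cast; ring) (h (2 * m))
    have hx2 : 2 ^ p * x < 2 * (m:ℝ) + 2 := by
      rw [hp1]; nlinarith
    -- the rounded-to-odd value
    set y : ℝ := ((2 * m + 1 : ℤ) : ℝ) / 2 ^ p with hy
    have hy1 : (2 * (m:ℝ)) < 2 ^ p * y := by
      rw [hy, mul_div_cancel₀ _ (ne_of_gt hpowp)]; push_cast; linarith
    have hy2 : 2 ^ p * y < 2 * (m:ℝ) + 2 := by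
      rw [hy, mul_div_cancel₀ _ (ne_of_gt hpowp)]; push_cast; linarith
    -- scaled bounds at precision k
    have key : ∀ z : ℝ, (2 * (m:ℝ)) < 2 ^ p * z → 2 ^ p * z < 2 * (m:ℝ) + 2 →
        (2 * (m:ℝ)) / 2 ^ q < 2 ^ k * z ∧ 2 ^ k * z < (2 * (m:ℝ) + 2) / 2 ^ q := by
      intro z h1 h2
      rw [hsplit] at h1 h2
      exact ⟨by rw [div_lt_iff₀ hpowq]; linarith,
             by rw [lt_div_iff₀ hpowq]; linarith⟩
    obtain ⟨hX1, hX2⟩ := key x hx1 hx2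
    obtain ⟨hY1, hY2⟩ := key y hy1 hy2
    -- signs agree
    have hsign : (0 ≤ y) ↔ (0 ≤ x) := by
      rcases le_or_gt 0 m with hm0 | hm0
      · have hm0' : (0:ℝ) ≤ (m:ℝ) := by exact_mod_cast hm0
        have hx0 : 0 < x := by
          by_contra hc
          push_neg at hc
          have := mul_nonpos_of_nonneg_of_nonpos (le_of_lt hpowp) hc
          linarith
        have hy0 : 0 < y := by
          rw [hy]
          apply div_pos _ hpowp
          exact_mod_cast (by omega : (0:ℤ) < 2 * m + 1)
        simp [le_of_lt hx0, le_of_lt hy0]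
      · have hm1' : (m:ℝ) ≤ -1 := by exact_mod_cast (by omega : m ≤ -1)
        have hx0 : x < 0 := by
          by_contra hc
          push_neg at hc
          have := mul_nonneg (le_of_lt hpowp) hc
          linarith
        have hy0 : y < 0 := by
          rw [hy]
          apply div_neg_of_neg_of_pos _ hpowp
          push_cast; linarith
        simp [not_le.mpr hx0, not_le.mpr hy0]
    unfold RA
    rcases le_or_gt 0 x with hx0 | hx0
    · rw [if_pos hx0, if_pos (hsign.mpr hx0),
        floor_half_eq q hq2 m (2 ^ k * y) (2 ^ k * x) hY1 hY2 hX1 hX2]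
    · rw [if_neg (not_le.mpr hx0),
        if_neg (fun hc => (not_le.mpr hx0) (hsign.mp hc)),
        ceil_half_eq q hq2 m (2 ^ k * y) (2 ^ k * x) hY1 hY2 hX1 hX2]
end

section
/- Let p k : ℕ with k + 2 ≤ p. For every real number x, rounding the round-to-odd result of x at precision p back to precision k with round-towards-zero gives the same value as rounding x directly: RZ k (roundOdd p x) = RZ k x. -/
/-- If `a` and `b` lie in an open interval containing no integer, then they have the
same floor, same ceiling, and the same sign. -/
lemma no_int_interval_key (a b lo hi : ℝ) (hno : ∀ n : ℤ, ¬(lo < (n : ℝ) ∧ (n : ℝ) < hi))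
    (ha1 : lo < a) (ha2 : a < hi) (hb1 : lo < b) (hb2 : b < hi) :
    ⌊a⌋ = ⌊b⌋ ∧ ⌈a⌉ = ⌈b⌉ ∧ (0 ≤ a ↔ 0 ≤ b) := by
  have Hf : ∀ u v : ℝ, lo < u → u < hi → v < hi → ⌊v⌋ ≤ ⌊u⌋ := by
    intro u v hu1 hu2 hv2
    by_contra hcon
    push_neg at hcon
    have h1 : (⌊v⌋ : ℝ) ≤ v := Int.floor_le v
    have h2 : (⌊u⌋ : ℝ) + 1 ≤ (⌊v⌋ : ℝ) := by exact_mod_cast hcon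
    have h3 : u < (⌊v⌋ : ℝ) := by linarith [Int.lt_floor_add_one u]
    exact hno ⌊v⌋ ⟨lt_trans hu1 h3, lt_of_le_of_lt h1 hv2⟩
  have Hc : ∀ u v : ℝ, lo < u → u < hi → lo < v → ⌈u⌉ ≤ ⌈v⌉ := by
    intro u v hu1 hu2 hv1
    by_contra hcon
    push_neg at hcon
    have h1 : v ≤ (⌈v⌉ : ℝ) := Int.le_ceil v
    have h2 : (⌈v⌉ : ℝ) + 1 ≤ (⌈u⌉ : ℝ) := by exact_mod_cast hcon
    have h3 : (⌈v⌉ : ℝ) < u := by linarith [Int.ceil_lt_add_one u]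
    exact hno ⌈v⌉ ⟨lt_of_lt_of_le hv1 h1, lt_trans h3 hu2⟩
  refine ⟨le_antisymm (Hf b a hb1 hb2 ha2) (Hf a b ha1 ha2 hb2),
    le_antisymm (Hc a b ha1 ha2 hb1) (Hc b a hb1 hb2 ha1), ?_⟩
  constructor
  · intro ha
    by_contra hb
    push_neg at hb
    exact hno 0 ⟨by exact_mod_cast lt_of_lt_of_le hb1 (le_of_lt hb),
      by exact_mod_cast lt_of_le_of_lt ha ha2⟩
  · intro hb
    by_contra ha
    push_neg at ha
    exact hno 0 ⟨by exact_mod_cast lt_of_lt_of_le ha1 (le_of_lt ha),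
      by exact_mod_cast lt_of_le_of_lt hb hb2⟩

theorem roundOdd_RZ_double_rounding (p k : ℕ) (hkp : k + 2 ≤ p) (x : ℝ) :
    RZ k (roundOdd p x) = RZ k x := by
  unfold roundOdd
  split_ifs with h
  · rfl
  · set m := ⌊(2 : ℝ) ^ (p - 1) * x⌋ with hm
    have hp1 : p - 1 + 1 = p := by omega
    set q := p - 1 - k with hqdef
    have hqk : q + k = p - 1 := by omega
    have h2q2k : (2 : ℝ) ^ q * 2 ^ k = 2 ^ (p - 1) := by rw [← pow_add, hqk]
    have h2p : (2 : ℝ) ^ p = 2 ^ (p - 1) * 2 := by rw [← pow_succ, hp1]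
    have hqpos : (0 : ℝ) < 2 ^ q := by positivity
    have hnonint : ∀ n : ℤ, (2 : ℝ) ^ (p - 1) * x ≠ (n : ℝ) := by
      intro n hn
      refine h ⟨2 * n, ?_⟩
      rw [h2p]
      push_cast
      nlinarith
    have hma : (m : ℝ) < 2 ^ (p - 1) * x :=
      lt_of_le_of_ne (Int.floor_le _) (Ne.symm (hnonint m))
    have hma2 : (2 : ℝ) ^ (p - 1) * x < (m : ℝ) + 1 := Int.lt_floor_add_one _
    set y : ℝ := ((2 * m + 1 : ℤ) : ℝ) / 2 ^ p with hy
    have hy2q : (2 : ℝ) ^ q * (2 ^ k * y) = (2 * (m : ℝ) + 1) / 2 := by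
      rw [hy, h2p, ← h2q2k]
      push_cast
      field_simp
    have ha2q : (2 : ℝ) ^ q * (2 ^ k * x) = 2 ^ (p - 1) * x := by
      rw [← h2q2k]; ring
    have key := no_int_interval_key ((2 : ℝ) ^ k * x) ((2 : ℝ) ^ k * y)
      ((m : ℝ) / 2 ^ q) (((m : ℝ) + 1) / 2 ^ q)
      (by
        rintro n ⟨h1, h2⟩
        rw [div_lt_iff₀ hqpos] at h1
        rw [lt_div_iff₀ hqpos] at h2
        have e1 : (m : ℝ) < ((n * 2 ^ q : ℤ) : ℝ) := by push_cast; linarith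
        have e2 : ((n * 2 ^ q : ℤ) : ℝ) < (m : ℝ) + 1 := by push_cast; linarith
        have i1 : m < n * 2 ^ q := by exact_mod_cast e1
        have i2 : n * 2 ^ q < m + 1 := by exact_mod_cast e2
        omega)
      (by rw [div_lt_iff₀ hqpos]; nlinarith)
      (by rw [lt_div_iff₀ hqpos]; nlinarith)
      (by rw [div_lt_iff₀ hqpos]; nlinarith)
      (by rw [lt_div_iff₀ hqpos]; nlinarith)
    obtain ⟨hf, hc, hs⟩ := key
    have hkpos : (0 : ℝ) < 2 ^ k := by positivity
    have hsx : (0 ≤ y) ↔ (0 ≤ x) := by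
      rw [← mul_nonneg_iff_of_pos_left hkpos, ← mul_nonneg_iff_of_pos_left hkpos (b := x)]
      exact hs.symm
    unfold RZ
    by_cases hx : 0 ≤ x
    · rw [if_pos (hsx.mpr hx), if_pos hx, hf]
    · rw [if_neg (fun hh => hx (hsx.mp hh)), if_neg hx, hc]
end

section
/- Let p k : ℕ with k + 2 ≤ p. For every real number x, rounding the round-to-odd result of x at precision p back to precision k with round-towards-positive-infinity gives the same value as rounding x directly: RU k (roundOdd p x) = RU k x. -/
theorem roundOdd_RU_double_rounding (p k : ℕ) (hkp : k + 2 ≤ p) (x : ℝ) :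
    RU k (roundOdd p x) = RU k x := by
  unfold roundOdd
  split_ifs with h
  · rfl
  · unfold RU
    push_neg at h
    set n : ℤ := ⌊(2 : ℝ) ^ (p - 1) * x⌋ with hn
    set m : ℤ := ⌈(2 : ℝ) ^ k * x⌉ with hm
    set q : ℕ := p - k with hq
    have hq2 : 2 ≤ q := by omega
    have hpk : p = k + q := by omega
    have hp1 : p = (p - 1) + 1 := by omega
    have h2q : (0:ℝ) < (2:ℝ) ^ q := by positivity
    have h2k : (0:ℝ) < (2:ℝ) ^ k := by positivity
    have hsplit : (2:ℝ) ^ p = 2 ^ k * 2 ^ q := by rw [hpk, pow_add]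
    have hsplit1 : (2:ℝ) ^ p = 2 ^ (p-1) * 2 := by rw [← pow_succ, Nat.sub_add_cancel (by omega : 1 ≤ p)]
    -- strict bounds: 2n < 2^p x < 2n + 2
    have hlow : (2:ℝ) * n < 2 ^ p * x := by
      have h1 : (n:ℝ) ≤ 2 ^ (p-1) * x := Int.floor_le _
      have h2 : (2:ℝ) * n ≤ 2 ^ p * x := by
        rw [hsplit1]; nlinarith
      rcases lt_or_eq_of_le h2 with h3 | h3
      · exact h3
      · exact absurd h3.symm (by exact_mod_cast h (2*n))
    have hhigh : (2:ℝ) ^ p * x < 2 * n + 2 := by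
      have h1 : (2:ℝ) ^ (p-1) * x < n + 1 := Int.lt_floor_add_one _
      rw [hsplit1]; nlinarith
    -- m bounds
    have hmub : (2:ℝ) ^ k * x ≤ m := Int.le_ceil _
    have hmlb : (m:ℝ) - 1 < 2 ^ k * x := by
      have := Int.ceil_lt_add_one ((2:ℝ) ^ k * x); linarith
    -- integer bounds
    have hA : 2 * n + 1 < 2 ^ q * m := by
      have : (2:ℝ) * n < 2 ^ q * m := by
        have : (2:ℝ)^q * (2^k * x) ≤ 2^q * m := by nlinarith
        rw [hsplit] at hlow; nlinarith
      have h4 : 2 * n < 2 ^ q * m := by exact_mod_cast this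
      have heven : (2:ℤ) ∣ 2 ^ q * m := Dvd.dvd.mul_right (dvd_pow_self 2 (by omega)) m
      omega
    have hB : 2 ^ q * (m - 1) < 2 * n + 1 := by
      have : (2:ℝ) ^ q * (m - 1) < 2 * n + 2 := by
        have : (2:ℝ)^q * ((m:ℝ) - 1) < 2^q * (2^k * x) := by nlinarith
        rw [hsplit] at hhigh; nlinarith
      have h4 : 2 ^ q * (m - 1) < 2 * n + 2 := by exact_mod_cast this
      have heven : (2:ℤ) ∣ 2 ^ q * (m - 1) := Dvd.dvd.mul_right (dvd_pow_self 2 (by omega)) _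
      omega
    -- compute the ceiling of the rounded value
    have hval : (2:ℝ) ^ k * (((2 * n + 1 : ℤ) : ℝ) / 2 ^ p) = ((2 * n + 1 : ℤ) : ℝ) / 2 ^ q := by
      rw [hsplit]; field_simp
    have hceil : ⌈(2:ℝ) ^ k * (((2 * n + 1 : ℤ) : ℝ) / 2 ^ p)⌉ = m := by
      rw [hval, Int.ceil_eq_iff]
      constructor
      · rw [lt_div_iff₀ h2q]
        have : ((2:ℤ) ^ q * (m-1) : ℝ) < ((2 * n + 1 : ℤ) : ℝ) := by exact_mod_cast hB
        push_cast at this ⊢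
        nlinarith
      · rw [div_le_iff₀ h2q]
        have : ((2 * n + 1 : ℤ) : ℝ) < ((2:ℤ) ^ q * m : ℝ) := by exact_mod_cast hA
        push_cast at this ⊢
        nlinarith
    rw [hceil]
end

section
/- Let p k : ℕ with k + 2 ≤ p. For every real number x, rounding the round-to-odd result of x at precision p back to precision k with round-towards-negative-infinity gives the same value as rounding x directly: RD k (roundOdd p x) = RD k x. -/
theorem roundOdd_RD_double_rounding (p k : ℕ) (hkp : k + 2 ≤ p) (x : ℝ) :
    RD k (roundOdd p x) = RD k x := by
  unfold roundOdd
  split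
  · rfl
  · obtain ⟨q, rfl⟩ : ∃ q, p = k + 2 + q := ⟨p - (k + 2), by omega⟩
    unfold RD
    have hpk : k + 2 + q - 1 = k + 1 + q := by omega
    rw [hpk]
    set m := ⌊(2 : ℝ) ^ (k + 1 + q) * x⌋ with hm
    set n := ⌊(2 : ℝ) ^ k * x⌋ with hn
    have h1 : (n : ℝ) ≤ 2 ^ k * x := Int.floor_le _
    have h2 : (2 : ℝ) ^ k * x < n + 1 := Int.lt_floor_add_one _
    have hA : (n : ℝ) * 2 ^ (1 + q) ≤ (m : ℝ) := by
      have : n * (2 ^ (1 + q) : ℤ) ≤ m := by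
        rw [hm]
        apply Int.le_floor.mpr
        push_cast
        calc (n : ℝ) * 2 ^ (1 + q) ≤ (2 ^ k * x) * 2 ^ (1 + q) :=
              mul_le_mul_of_nonneg_right h1 (by positivity)
          _ = 2 ^ (k + 1 + q) * x := by ring
      exact_mod_cast this
    have hB : (m : ℝ) + 1 ≤ ((n : ℝ) + 1) * 2 ^ (1 + q) := by
      have : m + 1 ≤ (n + 1) * (2 ^ (1 + q) : ℤ) := by
        have hlt : m < (n + 1) * (2 ^ (1 + q) : ℤ) := by
          rw [hm]
          apply Int.floor_lt.mpr
          push_cast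
          calc (2 : ℝ) ^ (k + 1 + q) * x = (2 ^ k * x) * 2 ^ (1 + q) := by ring
            _ < ((n : ℝ) + 1) * 2 ^ (1 + q) :=
              mul_lt_mul_of_pos_right h2 (by positivity)
        omega
      exact_mod_cast this
    have key : ⌊(2 : ℝ) ^ k * (((2 * m + 1 : ℤ) : ℝ) / 2 ^ (k + 2 + q))⌋ = n := by
      have harg : (2 : ℝ) ^ k * (((2 * m + 1 : ℤ) : ℝ) / 2 ^ (k + 2 + q))
          = ((2 * m + 1 : ℤ) : ℝ) / 2 ^ (2 + q) := by
        rw [eq_div_iff (by positivity)]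
        field_simp
        ring
      rw [harg, Int.floor_eq_iff]
      have hpos : (0 : ℝ) < 2 ^ (2 + q) := by positivity
      constructor
      · rw [le_div_iff₀ hpos]
        push_cast
        have : (2 : ℝ) ^ (2 + q) = 2 * 2 ^ (1 + q) := by ring
        rw [this]
        nlinarith
      · rw [div_lt_iff₀ hpos]
        push_cast
        have : (2 : ℝ) ^ (2 + q) = 2 * 2 ^ (1 + q) := by ring
        rw [this]
        nlinarith
    rw [key]
end

section
/- Let p k : ℕ with k + 2 ≤ p. For all real numbers x and v, if roundOdd p v = roundOdd p x (i.e. v lies in the odd interval of the round-to-odd result of x at precision p), then v and x round identically to precision k under all five IEEE-754 rounding modes: RN k v = RN k x, RA k v = RA k x, RZ k v = RZ k x, RU k v = RU k x, and RD k v = RD k x. -/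
lemma roundOdd_cmp (p k : ℕ) (hkp : k + 2 ≤ p) (t : ℝ) (m : ℤ) :
    ((m : ℝ) ≤ 2 ^ (k+1) * roundOdd p t ↔ (m : ℝ) ≤ 2 ^ (k+1) * t) ∧
    (2 ^ (k+1) * roundOdd p t ≤ (m : ℝ) ↔ 2 ^ (k+1) * t ≤ (m : ℝ)) := by
  unfold roundOdd
  split_ifs with h
  · exact ⟨Iff.rfl, Iff.rfl⟩
  · obtain ⟨d, rfl⟩ : ∃ d, p = k + 2 + d := ⟨p - (k+2), by omega⟩
    push_neg at h
    rw [show k + 2 + d - 1 = k + 1 + d from by omega]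
    set j := ⌊(2:ℝ) ^ (k + 1 + d) * t⌋ with hj
    have hfl : (j:ℝ) ≤ 2 ^ (k+1+d) * t := Int.floor_le _
    have hfu : 2 ^ (k+1+d) * t < (j:ℝ) + 1 := Int.lt_floor_add_one _
    have hpow : (2:ℝ) ^ (k+2+d) = 2 * 2 ^ (k+1+d) := by ring
    have hlow : (2*(j:ℝ)) < 2 ^ (k+2+d) * t := by
      rcases lt_or_eq_of_le hfl with h' | h'
      · rw [hpow]; nlinarith
      · exact absurd (by rw [hpow]; push_cast; linarith) (h (2*j))
    have hhigh : 2 ^ (k+2+d) * t < 2*(j:ℝ) + 2 := by rw [hpow]; nlinarith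
    have hMeven : (2:ℤ) ∣ m * 2 ^ (d+1) := ⟨m * 2 ^ d, by ring⟩
    have hpos : (0:ℝ) < 2 ^ (d+1) := by positivity
    have hppos : (0:ℝ) < 2 ^ (k+2+d) := by positivity
    have hscale : (2:ℝ) ^ (k+1) * 2 ^ (d+1) = 2 ^ (k+2+d) := by
      rw [← pow_add]; ring_nf
    have huval : 2 ^ (k+2+d) * (((2 * j + 1 : ℤ) : ℝ) / 2 ^ (k+2+d)) = (2*(j:ℝ)+1) := by
      push_cast; field_simp
    have tside : ∀ s : ℝ, (2*(j:ℝ)) < 2 ^ (k+2+d) * s → 2 ^ (k+2+d) * s < 2*(j:ℝ) + 2 →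
        (((m:ℝ) ≤ 2 ^ (k+1) * s) ↔ m * 2 ^ (d+1) ≤ 2*j + 1) := by
      intro s hs1 hs2
      have step1 : ((m:ℝ) ≤ 2 ^ (k+1) * s) ↔ ((m:ℝ) * 2 ^ (d+1) ≤ 2 ^ (k+2+d) * s) := by
        rw [← hscale]
        constructor
        · intro hh; nlinarith
        · intro hh; nlinarith
      rw [step1]
      constructor
      · intro hh
        by_contra hc
        push_neg at hc
        have h2 : (2*j + 2 : ℤ) ≤ m * 2 ^ (d+1) := by omega
        have h3 : (2*(j:ℝ) + 2) ≤ (m:ℝ) * 2 ^ (d+1) := by exact_mod_cast h2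
        linarith
      · intro hh
        have h2 : m * 2 ^ (d+1) ≤ 2*j := by omega
        have h3 : (m:ℝ) * 2 ^ (d+1) ≤ 2*(j:ℝ) := by exact_mod_cast h2
        linarith
    have tside' : ∀ s : ℝ, (2*(j:ℝ)) < 2 ^ (k+2+d) * s → 2 ^ (k+2+d) * s < 2*(j:ℝ) + 2 →
        ((2 ^ (k+1) * s ≤ (m:ℝ)) ↔ 2*j + 1 ≤ m * 2 ^ (d+1)) := by
      intro s hs1 hs2
      have step1 : (2 ^ (k+1) * s ≤ (m:ℝ)) ↔ (2 ^ (k+2+d) * s ≤ (m:ℝ) * 2 ^ (d+1)) := by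
        rw [← hscale]
        constructor
        · intro hh; nlinarith
        · intro hh; nlinarith
      rw [step1]
      constructor
      · intro hh
        by_contra hc
        push_neg at hc
        have h2 : m * 2 ^ (d+1) ≤ 2*j := by omega
        have h3 : (m:ℝ) * 2 ^ (d+1) ≤ 2*(j:ℝ) := by exact_mod_cast h2
        linarith
      · intro hh
        have h2 : (2*j + 2 : ℤ) ≤ m * 2 ^ (d+1) := by omega
        have h3 : (2*(j:ℝ) + 2) ≤ (m:ℝ) * 2 ^ (d+1) := by exact_mod_cast h2
        linarith
    have hulow : (2*(j:ℝ)) < 2 ^ (k+2+d) * (((2 * j + 1 : ℤ) : ℝ) / 2 ^ (k+2+d)) := by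
      rw [huval]; linarith
    have huhigh : 2 ^ (k+2+d) * (((2 * j + 1 : ℤ) : ℝ) / 2 ^ (k+2+d)) < 2*(j:ℝ) + 2 := by
      rw [huval]; linarith
    exact ⟨(tside _ hulow huhigh).trans (tside _ hlow hhigh).symm,
           (tside' _ hulow huhigh).trans (tside' _ hlow hhigh).symm⟩

lemma roundOdd_floor (p k : ℕ) (hkp : k + 2 ≤ p) (t : ℝ) : ⌊(2:ℝ) ^ k * roundOdd p t⌋ = ⌊(2:ℝ) ^ k * t⌋ := by
  set u := roundOdd p t with hu
  set n := ⌊(2:ℝ) ^ k * t⌋ with hn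
  have hp : (2:ℝ) ^ (k+1) = 2 ^ k * 2 := pow_succ 2 k
  have a1 : (n:ℝ) ≤ 2 ^ k * t := Int.floor_le _
  have a2 : 2 ^ k * t < (n:ℝ) + 1 := Int.lt_floor_add_one _
  have b1 : ((2*n : ℤ):ℝ) ≤ 2 ^ (k+1) * t := by rw [hp]; push_cast; linarith
  have b2 : ¬ (((2*n+2 : ℤ):ℝ) ≤ 2 ^ (k+1) * t) := by rw [hp]; push_cast; linarith
  have c1 := (roundOdd_cmp p k hkp t (2*n)).1.mpr b1
  have c2 := fun hh => b2 ((roundOdd_cmp p k hkp t (2*n+2)).1.mp hh)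
  rw [hp] at c1 c2; push_cast at c1 c2
  refine Int.floor_eq_iff.mpr ⟨by linarith, by_contra fun hc => c2 (by push_neg at hc; linarith)⟩

lemma roundOdd_ceil (p k : ℕ) (hkp : k + 2 ≤ p) (t : ℝ) : ⌈(2:ℝ) ^ k * roundOdd p t⌉ = ⌈(2:ℝ) ^ k * t⌉ := by
  set u := roundOdd p t with hu
  set n := ⌈(2:ℝ) ^ k * t⌉ with hn
  have hp : (2:ℝ) ^ (k+1) = 2 ^ k * 2 := pow_succ 2 k
  have a1 : 2 ^ k * t ≤ (n:ℝ) := Int.le_ceil _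
  have a2 : (n:ℝ) - 1 < 2 ^ k * t := by
    have := Int.ceil_lt_add_one ((2:ℝ) ^ k * t); linarith
  have b1 : 2 ^ (k+1) * t ≤ ((2*n : ℤ):ℝ) := by rw [hp]; push_cast; linarith
  have b2 : ¬ (2 ^ (k+1) * t ≤ ((2*n-2 : ℤ):ℝ)) := by rw [hp]; push_cast; linarith
  have c1 := (roundOdd_cmp p k hkp t (2*n)).2.mpr b1
  have c2 := fun hh => b2 ((roundOdd_cmp p k hkp t (2*n-2)).2.mp hh)
  rw [hp] at c1 c2; push_cast at c1 c2
  exact Int.ceil_eq_iff.mpr ⟨by_contra fun hc => c2 (by push_neg at hc; linarith), by linarith⟩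

lemma roundOdd_sign (p k : ℕ) (hkp : k + 2 ≤ p) (t : ℝ) :
    (0 ≤ roundOdd p t) ↔ (0 ≤ t) := by
  have h := (roundOdd_cmp p k hkp t 0).1
  push_cast at h
  have hpos : (0:ℝ) < 2 ^ (k+1) := by positivity
  constructor
  · intro hh
    have : (0:ℝ) ≤ 2 ^ (k+1) * roundOdd p t := mul_nonneg (le_of_lt hpos) hh
    have := h.mp this
    nlinarith
  · intro hh
    have : (0:ℝ) ≤ 2 ^ (k+1) * t := mul_nonneg (le_of_lt hpos) hh
    have := h.mpr this
    nlinarith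

lemma roundOdd_floor_half (p k : ℕ) (hkp : k + 2 ≤ p) (t : ℝ) :
    ⌊(2:ℝ) ^ k * roundOdd p t + 1/2⌋ = ⌊(2:ℝ) ^ k * t + 1/2⌋ := by
  set u := roundOdd p t with hu
  set n := ⌊(2:ℝ) ^ k * t + 1/2⌋ with hn
  have hp : (2:ℝ) ^ (k+1) = 2 ^ k * 2 := pow_succ 2 k
  have a1 : (n:ℝ) ≤ 2 ^ k * t + 1/2 := Int.floor_le _
  have a2 : 2 ^ k * t + 1/2 < (n:ℝ) + 1 := Int.lt_floor_add_one _
  have b1 : ((2*n-1 : ℤ):ℝ) ≤ 2 ^ (k+1) * t := by rw [hp]; push_cast; linarith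
  have b2 : ¬ (((2*n+1 : ℤ):ℝ) ≤ 2 ^ (k+1) * t) := by rw [hp]; push_cast; linarith
  have c1 := (roundOdd_cmp p k hkp t (2*n-1)).1.mpr b1
  have c2 := fun hh => b2 ((roundOdd_cmp p k hkp t (2*n+1)).1.mp hh)
  rw [hp] at c1 c2; push_cast at c1 c2
  refine Int.floor_eq_iff.mpr ⟨by linarith, by_contra fun hc => c2 (by push_neg at hc; linarith)⟩

lemma roundOdd_ceil_half (p k : ℕ) (hkp : k + 2 ≤ p) (t : ℝ) :
    ⌈(2:ℝ) ^ k * roundOdd p t - 1/2⌉ = ⌈(2:ℝ) ^ k * t - 1/2⌉ := by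
  set u := roundOdd p t with hu
  set n := ⌈(2:ℝ) ^ k * t - 1/2⌉ with hn
  have hp : (2:ℝ) ^ (k+1) = 2 ^ k * 2 := pow_succ 2 k
  have a1 : 2 ^ k * t - 1/2 ≤ (n:ℝ) := Int.le_ceil _
  have a2 : (n:ℝ) - 1 < 2 ^ k * t - 1/2 := by
    have := Int.ceil_lt_add_one ((2:ℝ) ^ k * t - 1/2); linarith
  have b1 : 2 ^ (k+1) * t ≤ ((2*n+1 : ℤ):ℝ) := by rw [hp]; push_cast; linarith
  have b2 : ¬ (2 ^ (k+1) * t ≤ ((2*n-1 : ℤ):ℝ)) := by rw [hp]; push_cast; linarith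
  have c1 := (roundOdd_cmp p k hkp t (2*n+1)).2.mpr b1
  have c2 := fun hh => b2 ((roundOdd_cmp p k hkp t (2*n-1)).2.mp hh)
  rw [hp] at c1 c2; push_cast at c1 c2
  exact Int.ceil_eq_iff.mpr ⟨by_contra fun hc => c2 (by push_neg at hc; linarith), by linarith⟩

lemma roundOdd_round (p k : ℕ) (hkp : k + 2 ≤ p) (t : ℝ) :
    round ((2:ℝ) ^ k * roundOdd p t) = round ((2:ℝ) ^ k * t) := by
  rw [round_eq, round_eq, roundOdd_floor_half p k hkp t]

lemma roundOdd_fract (p k : ℕ) (hkp : k + 2 ≤ p) (t : ℝ) :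
    (Int.fract ((2:ℝ) ^ k * roundOdd p t) = 1/2) ↔ (Int.fract ((2:ℝ) ^ k * t) = 1/2) := by
  set u := roundOdd p t with hu
  have hp : (2:ℝ) ^ (k+1) = 2 ^ k * 2 := pow_succ 2 k
  have hf := roundOdd_floor p k hkp t
  set n := ⌊(2:ℝ) ^ k * t⌋ with hn
  have key : ∀ s : ℝ, ⌊(2:ℝ)^k * s⌋ = n →
      ((Int.fract ((2:ℝ) ^ k * s) = 1/2) ↔ (2 ^ (k+1) * s = ((2*n+1 : ℤ):ℝ))) := by
    intro s hs
    rw [Int.fract, hs, hp]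
    push_cast
    constructor <;> intro hh <;> linarith
  have heq : (2 ^ (k+1) * u = ((2*n+1 : ℤ):ℝ)) ↔ (2 ^ (k+1) * t = ((2*n+1 : ℤ):ℝ)) := by
    have h1 := (roundOdd_cmp p k hkp t (2*n+1)).1
    have h2 := (roundOdd_cmp p k hkp t (2*n+1)).2
    constructor
    · intro hh; exact le_antisymm (h2.mp (le_of_eq hh)) (h1.mp (ge_of_eq hh))
    · intro hh; exact le_antisymm (h2.mpr (le_of_eq hh)) (h1.mpr (ge_of_eq hh))
  rw [key u hf, key t rfl, heq]

theorem oddInterval_rounds_identically (p k : ℕ) (hkp : k + 2 ≤ p) (x v : ℝ)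
    (hv : roundOdd p v = roundOdd p x) :
    RN k v = RN k x ∧ RA k v = RA k x ∧ RZ k v = RZ k x ∧
      RU k v = RU k x ∧ RD k v = RD k x := by
  have F : ⌊(2:ℝ) ^ k * v⌋ = ⌊(2:ℝ) ^ k * x⌋ := by
    rw [← roundOdd_floor p k hkp v, hv, roundOdd_floor p k hkp x]
  have C : ⌈(2:ℝ) ^ k * v⌉ = ⌈(2:ℝ) ^ k * x⌉ := by
    rw [← roundOdd_ceil p k hkp v, hv, roundOdd_ceil p k hkp x]
  have S : (0 ≤ v) ↔ (0 ≤ x) := by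
    rw [← roundOdd_sign p k hkp v, hv, roundOdd_sign p k hkp x]
  have FH : ⌊(2:ℝ) ^ k * v + 1/2⌋ = ⌊(2:ℝ) ^ k * x + 1/2⌋ := by
    rw [← roundOdd_floor_half p k hkp v, hv, roundOdd_floor_half p k hkp x]
  have CH : ⌈(2:ℝ) ^ k * v - 1/2⌉ = ⌈(2:ℝ) ^ k * x - 1/2⌉ := by
    rw [← roundOdd_ceil_half p k hkp v, hv, roundOdd_ceil_half p k hkp x]
  have R : round ((2:ℝ) ^ k * v) = round ((2:ℝ) ^ k * x) := by
    rw [← roundOdd_round p k hkp v, hv, roundOdd_round p k hkp x]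
  have Fr : (Int.fract ((2:ℝ) ^ k * v) = 1/2) ↔ (Int.fract ((2:ℝ) ^ k * x) = 1/2) := by
    rw [← roundOdd_fract p k hkp v, hv, roundOdd_fract p k hkp x]
  refine ⟨?_, ?_, ?_, ?_, ?_⟩
  · unfold RN; simp only [F, R, Fr]
  · unfold RA; simp only [S, FH, CH]
  · unfold RZ; simp only [S, F, C]
  · unfold RU; simp only [C]
  · unfold RD; simp only [F]
end

section
/- Let p q : ℕ with q + 1 ≤ p and let x : ℝ with 0 ≤ x. Then ⌊2^q * roundOdd p x⌋ = ⌊2^q * x⌋. (All binary digits of the round-to-odd result up to position p - 1 agree with those of x: truncating roundOdd p x to any precision q ≤ p - 1 gives the same result as truncating x.) -/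
lemma aux_floor (m : ℕ) (n : ℤ) (y : ℝ) (h1 : (n:ℝ) ≤ 2^m * y) (h2 : 2^m * y < n+1) :
    ⌊y⌋ = n / (2^m : ℤ) := by
  have hm : (0:ℤ) < 2^m := by positivity
  have hmr : (0:ℝ) < 2^m := by positivity
  rw [Int.floor_eq_iff]
  constructor
  · have h := Int.ediv_mul_le n (ne_of_gt hm)
    have : ((n / 2^m : ℤ) : ℝ) * 2^m ≤ (n:ℝ) := by exact_mod_cast h
    nlinarith
  · have h := Int.lt_ediv_add_one_mul_self n hm
    have h2i : (n:ℤ)+1 ≤ (n / 2^m + 1) * 2^m := h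
    have : (n:ℝ)+1 ≤ ((n / 2^m : ℤ) + 1 : ℝ) * 2^m := by exact_mod_cast h2i
    nlinarith

theorem roundOdd_floor_agree (p q : ℕ) (hqp : q + 1 ≤ p) (x : ℝ) (hx : 0 ≤ x) :
    ⌊(2 : ℝ) ^ q * roundOdd p x⌋ = ⌊(2 : ℝ) ^ q * x⌋ := by
  unfold roundOdd
  split
  · rfl
  · set n : ℤ := ⌊(2 : ℝ) ^ (p - 1) * x⌋ with hn
    set m : ℕ := p - 1 - q with hm
    have hmq : m + q = p - 1 := by omega
    have hpow : (2:ℝ) ^ m * (2:ℝ) ^ q = (2:ℝ) ^ (p-1) := by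
      rw [← pow_add, hmq]
    have hp1 : (2:ℝ) ^ p = 2 * (2:ℝ)^(p-1) := by
      rw [← pow_succ']
      congr 1
      omega
    have h1 : (n:ℝ) ≤ 2^m * (2^q * x) := by
      rw [← mul_assoc, hpow]; exact Int.floor_le _
    have h2 : 2^m * (2^q * x) < n + 1 := by
      rw [← mul_assoc, hpow]
      have := Int.lt_floor_add_one ((2:ℝ)^(p-1)*x)
      push_cast
      linarith
    have e1 := aux_floor m n (2^q * x) h1 h2
    have hval : (2:ℝ)^m * ((2:ℝ)^q * (((2 * n + 1 : ℤ) : ℝ) / 2 ^ p)) = ((2*n+1 : ℤ):ℝ) / 2 := by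
      rw [← mul_assoc, hpow, hp1]
      have : ((2:ℝ)^(p-1)) ≠ 0 := by positivity
      field_simp
    have h1' : (n:ℝ) ≤ 2^m * ((2:ℝ)^q * (((2 * n + 1 : ℤ) : ℝ) / 2 ^ p)) := by
      rw [hval]; push_cast; linarith
    have h2' : 2^m * ((2:ℝ)^q * (((2 * n + 1 : ℤ) : ℝ) / 2 ^ p)) < n + 1 := by
      rw [hval]; push_cast; linarith
    have e2 := aux_floor m n _ h1' h2'
    rw [e2, e1]
end

section
/- Let p : ℕ with 1 ≤ p and let x : ℝ with 0 ≤ x. Then 2^p * roundOdd p x is an integer, and ⌊2^p * roundOdd p x⌋ is odd if and only if 2^(p-1) * x is not an integer. (The last bit of the round-to-odd result at precision p equals the bitwise OR of all binary digits of x from position p onward.) -/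
theorem roundOdd_last_bit (p : ℕ) (hp : 1 ≤ p) (x : ℝ) (hx : 0 ≤ x) :
    (∃ m : ℤ, (2 : ℝ) ^ p * roundOdd p x = (m : ℝ)) ∧
      (Odd ⌊(2 : ℝ) ^ p * roundOdd p x⌋ ↔ ¬ ∃ m : ℤ, (2 : ℝ) ^ (p - 1) * x = (m : ℝ)) := by
  obtain ⟨q, rfl⟩ : ∃ q, p = q + 1 := ⟨p - 1, (Nat.succ_pred_eq_of_pos hp).symm⟩
  simp only [roundOdd, Nat.add_sub_cancel]
  have hpow : (2:ℝ)^(q+1) = 2 * 2^q := by ring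
  by_cases h : ∃ m : ℤ, (2:ℝ)^(q+1) * x = m
  · rw [if_pos h]
    obtain ⟨m, hm⟩ := h
    refine ⟨⟨m, hm⟩, ?_⟩
    have hfl : ⌊(2:ℝ)^(q+1) * x⌋ = m := by rw [hm]; exact Int.floor_intCast m
    rw [hfl]
    constructor
    · rintro hodd ⟨n, hn⟩
      have h2 : (m:ℝ) = 2*n := by
        rw [← hm, hpow, mul_assoc, hn]
      have : m = 2*n := by exact_mod_cast h2
      exact (Int.not_odd_iff_even.mpr ⟨n, by omega⟩) hodd
    · intro hne
      rcases Int.even_or_odd m with he | ho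
      · obtain ⟨n, hn⟩ := he
        exfalso; apply hne
        refine ⟨n, ?_⟩
        have : (2:ℝ) * ((2:ℝ)^q * x) = 2 * n := by
          rw [← mul_assoc, ← hpow, hm, hn]; push_cast; ring
        linarith
      · exact ho
  · rw [if_neg h]
    have hne : (2:ℝ)^(q+1) ≠ 0 := by positivity
    have key : (2:ℝ)^(q+1) * ((((2 * ⌊(2:ℝ)^q * x⌋ + 1 : ℤ)):ℝ) / 2^(q+1))
        = ((2 * ⌊(2:ℝ)^q * x⌋ + 1 : ℤ) : ℝ) := by
      field_simp
    rw [key]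
    refine ⟨⟨_, rfl⟩, ?_⟩
    rw [Int.floor_intCast]
    constructor
    · rintro - ⟨n, hn⟩
      exact h ⟨2*n, by rw [hpow, mul_assoc, hn]; push_cast; ring⟩
    · intro _; exact ⟨⌊(2:ℝ)^q * x⌋, by ring⟩
end

section
/- Let k : ℕ and let x y : ℝ. Suppose x and y have the same sign (Real.sign x = Real.sign y), that ⌊2^(k+1) * |x|⌋ = ⌊2^(k+1) * |y|⌋, and that 2^(k+1) * |x| is an integer if and only if 2^(k+1) * |y| is an integer (i.e. x and y have identical rounding components at precision k: the same sign, truncated value, rounding bit, and sticky bit). Then x and y round identically to precision k under all five IEEE-754 rounding modes: RN k x = RN k y, RA k x = RA k y, RZ k x = RZ k y, RU k x = RU k y, and RD k x = RD k y. -/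
open Classical


lemma L1 (a : ℝ) : ⌊a⌋ = ⌊2*a⌋ / 2 := by
  have h1 : ((⌊2*a⌋ : ℤ) : ℝ) ≤ 2*a := Int.floor_le _
  have h2 : 2*a < (⌊2*a⌋ : ℝ) + 1 := Int.lt_floor_add_one _
  have e1 : 2*(⌊2*a⌋/2) ≤ ⌊2*a⌋ := by omega
  have e2 : ⌊2*a⌋ + 1 ≤ 2*(⌊2*a⌋/2) + 2 := by omega
  rw [Int.floor_eq_iff]
  have c1 : ((2*(⌊2*a⌋/2) : ℤ) : ℝ) ≤ ((⌊2*a⌋ : ℤ) : ℝ) := by exact_mod_cast e1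
  have c2 : ((⌊2*a⌋ + 1 : ℤ) : ℝ) ≤ ((2*(⌊2*a⌋/2) + 2 : ℤ) : ℝ) := by exact_mod_cast e2
  push_cast at c1 c2 ⊢
  constructor <;> linarith

lemma Lceil (c : ℝ) : ⌈c⌉ = if ∃ m:ℤ, c = (m:ℝ) then ⌊c⌋ else ⌊c⌋+1 := by
  split
  · rename_i h; obtain ⟨m, rfl⟩ := h; simp
  · rename_i h
    rw [Int.ceil_eq_iff]
    constructor
    · push_cast
      rcases lt_or_eq_of_le (Int.floor_le c) with h' | h'
      · linarith
      · exact absurd ⟨⌊c⌋, h'.symm⟩ h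
    · push_cast; linarith [Int.lt_floor_add_one c]

lemma Lnegfloor (c : ℝ) : ⌊-c⌋ = if ∃ m:ℤ, c = (m:ℝ) then -⌊c⌋ else -⌊c⌋-1 := by
  rw [Int.floor_neg, Lceil]
  split <;> omega

lemma Lnegint (c : ℝ) : (∃ m:ℤ, -c = (m:ℝ)) ↔ (∃ m:ℤ, c = (m:ℝ)) := by
  constructor <;> rintro ⟨m, hm⟩ <;> exact ⟨-m, by push_cast; linarith⟩

lemma Lfract (a : ℝ) : Int.fract a = 1/2 ↔ (∃ m:ℤ, 2*a = (m:ℝ)) ∧ ⌊2*a⌋ % 2 = 1 := by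
  constructor
  · intro h
    have hf := Int.floor_add_fract a
    have ha : a = (⌊a⌋ : ℝ) + 1/2 := by rw [h] at hf; linarith
    have h2a : 2*a = ((2*⌊a⌋+1 : ℤ) : ℝ) := by push_cast; linarith
    have hfl : ⌊2*a⌋ = 2*⌊a⌋+1 := by rw [h2a, Int.floor_intCast]
    exact ⟨⟨2*⌊a⌋+1, h2a⟩, by omega⟩
  · rintro ⟨⟨m, hm⟩, hodd⟩
    have hfl : ⌊2*a⌋ = m := by rw [hm, Int.floor_intCast]
    obtain ⟨t, ht⟩ : ∃ t, m = 2*t+1 := ⟨m/2, by omega⟩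
    have ha : a = (t:ℝ) + 1/2 := by
      rw [ht] at hm; push_cast at hm; linarith
    rw [ha, Int.fract_intCast_add, Int.fract_eq_self.2 ⟨by norm_num, by norm_num⟩]

lemma Lint (a : ℝ) : (∃ m:ℤ, a = (m:ℝ)) ↔ (∃ m:ℤ, 2*a = (m:ℝ)) ∧ ⌊2*a⌋ % 2 = 0 := by
  constructor
  · rintro ⟨m, rfl⟩
    refine ⟨⟨2*m, by push_cast; ring⟩, ?_⟩
    have : (2:ℝ)*(m:ℝ) = ((2*m : ℤ) : ℝ) := by push_cast; ring
    rw [this, Int.floor_intCast]; omega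
  · rintro ⟨⟨m, hm⟩, hev⟩
    have hfl : ⌊2*a⌋ = m := by rw [hm, Int.floor_intCast]
    obtain ⟨t, ht⟩ : ∃ t, m = 2*t := ⟨m/2, by omega⟩
    refine ⟨t, ?_⟩
    rw [ht] at hm; push_cast at hm; linarith

lemma floor_from_neg (c c' : ℝ) (hf : ⌊-c⌋ = ⌊-c'⌋)
    (hi : (∃ m:ℤ, c = (m:ℝ)) ↔ (∃ m:ℤ, c' = (m:ℝ))) : ⌊c⌋ = ⌊c'⌋ := by
  have h1 := Lnegfloor (-c)
  have h2 := Lnegfloor (-c')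
  rw [neg_neg] at h1 h2
  rw [Lnegint] at h1 h2
  rw [h1, h2, hf]
  by_cases h : ∃ m:ℤ, c = (m:ℝ)
  · rw [if_pos h, if_pos (hi.mp h)]
  · rw [if_neg h, if_neg (fun hh => h (hi.mpr hh))]

lemma pack (a b : ℝ) (h2 : ⌊2*a⌋ = ⌊2*b⌋)
    (hI : (∃ m:ℤ, 2*a = (m:ℝ)) ↔ (∃ m:ℤ, 2*b = (m:ℝ))) :
    ⌊a⌋ = ⌊b⌋ ∧ ⌈a⌉ = ⌈b⌉ ∧ ⌊a+1/2⌋ = ⌊b+1/2⌋ ∧ ⌈a-1/2⌉ = ⌈b-1/2⌉ ∧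
      (Int.fract a = 1/2 ↔ Int.fract b = 1/2) ∧ round a = round b := by
  have hfl : ⌊a⌋ = ⌊b⌋ := by rw [L1 a, L1 b, h2]
  have hIa : (∃ m:ℤ, a = (m:ℝ)) ↔ (∃ m:ℤ, b = (m:ℝ)) := by
    rw [Lint a, Lint b, h2, hI]
  have hceil : ⌈a⌉ = ⌈b⌉ := by
    rw [Lceil a, Lceil b, hfl]
    by_cases h : ∃ m:ℤ, a = (m:ℝ)
    · rw [if_pos h, if_pos (hIa.mp h)]
    · rw [if_neg h, if_neg (fun hh => h (hIa.mpr hh))]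
  have hhalf : ⌊a+1/2⌋ = ⌊b+1/2⌋ := by
    have ea : (2:ℝ)*(a+1/2) = 2*a + (1:ℤ) := by push_cast; ring
    have eb : (2:ℝ)*(b+1/2) = 2*b + (1:ℤ) := by push_cast; ring
    rw [L1 (a+1/2), L1 (b+1/2), ea, eb, Int.floor_add_intCast, Int.floor_add_intCast, h2]
  have hneg2 : ⌊2*(-a)⌋ = ⌊2*(-b)⌋ := by
    have e1 : (2:ℝ)*(-a) = -(2*a) := by ring
    have e2 : (2:ℝ)*(-b) = -(2*b) := by ring
    rw [e1, e2, Lnegfloor (2*a), Lnegfloor (2*b), h2]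
    by_cases h : ∃ m:ℤ, 2*a = (m:ℝ)
    · rw [if_pos h, if_pos (hI.mp h)]
    · rw [if_neg h, if_neg (fun hh => h (hI.mpr hh))]
  have hsub : ⌈a-1/2⌉ = ⌈b-1/2⌉ := by
    have ea : (a - 1/2) = -(((-a) + 1/2)) := by ring
    have eb : (b - 1/2) = -(((-b) + 1/2)) := by ring
    rw [ea, eb, Int.ceil_neg, Int.ceil_neg]
    congr 1
    have e1 : (2:ℝ)*((-a)+1/2) = 2*(-a) + (1:ℤ) := by push_cast; ring
    have e2 : (2:ℝ)*((-b)+1/2) = 2*(-b) + (1:ℤ) := by push_cast; ring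
    rw [L1 ((-a)+1/2), L1 ((-b)+1/2), e1, e2, Int.floor_add_intCast, Int.floor_add_intCast, hneg2]
  have hfr : Int.fract a = 1/2 ↔ Int.fract b = 1/2 := by
    rw [Lfract a, Lfract b, h2, hI]
  have hrd : round a = round b := by
    rw [round_eq, round_eq, hhalf]
  exact ⟨hfl, hceil, hhalf, hsub, hfr, hrd⟩

lemma main_aux (k : ℕ) (x y : ℝ)
    (h2 : ⌊2*((2:ℝ)^k*x)⌋ = ⌊2*((2:ℝ)^k*y)⌋)
    (hI : (∃ m:ℤ, 2*((2:ℝ)^k*x) = (m:ℝ)) ↔ (∃ m:ℤ, 2*((2:ℝ)^k*y) = (m:ℝ)))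
    (hs : 0 ≤ x ↔ 0 ≤ y) :
    RN k x = RN k y ∧ RA k x = RA k y ∧ RZ k x = RZ k y ∧
      RU k x = RU k y ∧ RD k x = RD k y := by
  obtain ⟨hfl, hceil, hhalf, hsub, hfr, hrd⟩ := pack _ _ h2 hI
  refine ⟨?_, ?_, ?_, ?_, ?_⟩
  · unfold RN
    congr 1
    by_cases h : Int.fract ((2:ℝ)^k*x) = 1/2
    · rw [if_pos h, if_pos (hfr.mp h), hfl]
    · rw [if_neg h, if_neg (fun hh => h (hfr.mpr hh)), hrd]
  · unfold RA
    by_cases h : 0 ≤ x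
    · rw [if_pos h, if_pos (hs.mp h), hhalf]
    · rw [if_neg h, if_neg (fun hh => h (hs.mpr hh)), hsub]
  · unfold RZ
    by_cases h : 0 ≤ x
    · rw [if_pos h, if_pos (hs.mp h), hfl]
    · rw [if_neg h, if_neg (fun hh => h (hs.mpr hh)), hceil]
  · unfold RU; rw [hceil]
  · unfold RD; rw [hfl]

theorem same_rounding_components (k : ℕ) (x y : ℝ)
    (hsign : Real.sign x = Real.sign y)
    (hfloor : ⌊(2 : ℝ) ^ (k + 1) * |x|⌋ = ⌊(2 : ℝ) ^ (k + 1) * |y|⌋)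
    (hint : (∃ m : ℤ, (2 : ℝ) ^ (k + 1) * |x| = (m : ℝ)) ↔
      (∃ m : ℤ, (2 : ℝ) ^ (k + 1) * |y| = (m : ℝ))) :
    RN k x = RN k y ∧ RA k x = RA k y ∧ RZ k x = RZ k y ∧
      RU k x = RU k y ∧ RD k x = RD k y := by
  rcases lt_trichotomy x 0 with hx | hx | hx
  · have hy : y < 0 := by
      by_contra hy
      push_neg at hy
      rcases lt_or_eq_of_le hy with hy' | hy'
      · rw [Real.sign_of_neg hx, Real.sign_of_pos hy'] at hsign; norm_num at hsign
      · rw [Real.sign_of_neg hx, ← hy', Real.sign_zero] at hsign; norm_num at hsign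
    have ex : (2:ℝ)^(k+1) * |x| = -(2*((2:ℝ)^k*x)) := by
      rw [abs_of_neg hx, pow_succ]; ring
    have ey : (2:ℝ)^(k+1) * |y| = -(2*((2:ℝ)^k*y)) := by
      rw [abs_of_neg hy, pow_succ]; ring
    rw [ex, ey] at hfloor hint
    rw [Lnegint, Lnegint] at hint
    have h2 := floor_from_neg _ _ hfloor hint
    exact main_aux k x y h2 hint (by constructor <;> intro h <;> linarith)
  · have hy : y = 0 := by
      rw [hx, Real.sign_zero] at hsign
      by_contra hy
      rcases lt_trichotomy y 0 with h | h | h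
      · rw [Real.sign_of_neg h] at hsign; norm_num at hsign
      · exact hy h
      · rw [Real.sign_of_pos h] at hsign; norm_num at hsign
    subst hx; subst hy
    exact ⟨rfl, rfl, rfl, rfl, rfl⟩
  · have hy : 0 < y := by
      by_contra hy
      push_neg at hy
      rcases lt_or_eq_of_le hy with hy' | hy'
      · rw [Real.sign_of_pos hx, Real.sign_of_neg hy'] at hsign; norm_num at hsign
      · rw [Real.sign_of_pos hx, hy', Real.sign_zero] at hsign; norm_num at hsign
    have ex : (2:ℝ)^(k+1) * |x| = 2*((2:ℝ)^k*x) := by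
      rw [abs_of_pos hx, pow_succ]; ring
    have ey : (2:ℝ)^(k+1) * |y| = 2*((2:ℝ)^k*y) := by
      rw [abs_of_pos hy, pow_succ]; ring
    rw [ex, ey] at hfloor hint
    exact main_aux k x y hfloor hint (by constructor <;> intro h <;> linarith)
end

section
/- Let p : ℕ with 1 ≤ p and let m : ℤ be even. For every real number x, roundOdd p x = m / 2^p if and only if x = m / 2^p. (The odd interval of an even precision-p value is a singleton: the only real that round-to-odd maps to an even value is that value itself.) -/
theorem roundOdd_eq_even_iff (p : ℕ) (hp : 1 ≤ p) (m : ℤ) (hm : Even m) (x : ℝ) :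
    roundOdd p x = (m : ℝ) / 2 ^ p ↔ x = (m : ℝ) / 2 ^ p := by
  unfold roundOdd
  split_ifs with h
  · rfl
  · constructor
    · intro he
      exfalso
      have h2 : (0:ℝ) < 2 ^ p := by positivity
      have : ((2 * ⌊(2 : ℝ) ^ (p - 1) * x⌋ + 1 : ℤ) : ℝ) = (m : ℝ) := by
        field_simp at he
        exact_mod_cast he
      have hz : (2 * ⌊(2 : ℝ) ^ (p - 1) * x⌋ + 1 : ℤ) = m := by exact_mod_cast this
      have : Odd m := ⟨⌊(2 : ℝ) ^ (p - 1) * x⌋, by omega⟩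
      exact (Int.not_odd_iff_even.mpr hm) this
    · intro he
      exfalso
      apply h
      exact ⟨m, by rw [he]; field_simp⟩
end
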